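/- For 0 < α < 1 and the sequence p_n defined recursively by p_0 = 1 and p_n = Σ_{j=1}^{n} (a_{j-1} - a_j) p_{n-j}, each p_n satisfies 0 < p_n < 1 for n ≥ 1. -/

import Mathlib

open Real Finset

theorem stmt_1 (α : ℝ) (hα0 : 0 < α) (hα1 : α < 1)
    (a : ℕ → ℝ) (ha : ∀ i : ℕ, a i = ((i : ℝ) + 1) ^ (1 - α) - (i : ℝ) ^ (1 - α))
    (p : ℕ → ℝ) (hp0 : p 0 = 1)
    (hp : ∀ n : ℕ, 1 ≤ n → p n = ∑ j ∈ Finset.Icc 1 n, (a (j - 1) - a j) * p (n - j)) :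
    ∀ n : ℕ, 1 ≤ n → 0 < p n ∧ p n < 1 := by
  have hexp0 : (0:ℝ) < 1 - α := by linarith
  have hexp1 : (1:ℝ) - α < 1 := by linarith
  -- a is positive
  have ha_pos : ∀ i : ℕ, 0 < a i := by
    intro i
    rw [ha i]
    have : ((i:ℝ)) ^ (1 - α) < ((i:ℝ) + 1) ^ (1 - α) :=
      Real.rpow_lt_rpow (by positivity) (by linarith) hexp0
    linarith
  have ha0 : a 0 = 1 := by
    rw [ha 0]
    simp [Real.zero_rpow (ne_of_gt hexp0), Real.one_rpow]
  -- a is strictly decreasing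
  have ha_dec : ∀ j : ℕ, 1 ≤ j → a j < a (j - 1) := by
    intro j hj
    have hconc := Real.strictConcaveOn_rpow hexp0 hexp1
    have hx : ((j:ℝ) - 1) ∈ Set.Ici (0:ℝ) := by
      simp only [Set.mem_Ici]
      have : (1:ℝ) ≤ (j:ℝ) := by exact_mod_cast hj
      linarith
    have hy : ((j:ℝ) + 1) ∈ Set.Ici (0:ℝ) := by
      simp only [Set.mem_Ici]; positivity
    have hxy : ((j:ℝ) - 1) ≠ ((j:ℝ) + 1) := by intro h; linarith [h]
    have key := hconc.2 hx hy hxy (by norm_num : (0:ℝ) < 1/2)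
      (by norm_num : (0:ℝ) < 1/2) (by norm_num)
    have hmid : (1/2 : ℝ) • ((j:ℝ) - 1) + (1/2 : ℝ) • ((j:ℝ) + 1) = (j:ℝ) := by
      simp [smul_eq_mul]; ring
    rw [hmid] at key
    simp only [smul_eq_mul] at key
    -- key : (j:ℝ)^(1-α) > 1/2 * (j-1)^(1-α) + 1/2 * (j+1)^(1-α)
    have hcast : ((j - 1 : ℕ) : ℝ) = (j:ℝ) - 1 := by
      have : (1:ℕ) ≤ j := hj
      push_cast [this]; ring
    rw [ha j, ha (j-1), hcast]
    have : (j:ℝ) - 1 + 1 = (j:ℝ) := by ring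
    rw [this]
    linarith
  -- telescoping sum of coefficients
  have hsum : ∀ n : ℕ, ∑ j ∈ Finset.Icc 1 n, (a (j - 1) - a j) = 1 - a n := by
    intro n
    rw [← Finset.Ico_add_one_right_eq_Icc, Finset.sum_Ico_eq_sum_range]
    simp only [Nat.add_sub_cancel]
    have : ∀ i ∈ Finset.range n, a (1 + i - 1) - a (1 + i) = a i - a (i + 1) := by
      intro i _
      congr 1 <;> congr 1 <;> omega
    rw [Finset.sum_congr rfl this, Finset.sum_range_sub' a, ha0]
  -- strong induction
  intro n
  induction n using Nat.strong_induction_on with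
  | _ n ih =>
    intro hn
    have hple : ∀ m : ℕ, m < n → p m ≤ 1 := by
      intro m hm
      rcases Nat.eq_zero_or_pos m with rfl | hm1
      · rw [hp0]
      · exact (ih m hm hm1).2.le
    have hppos : ∀ m : ℕ, m < n → 0 < p m := by
      intro m hm
      rcases Nat.eq_zero_or_pos m with rfl | hm1
      · rw [hp0]; norm_num
      · exact (ih m hm hm1).1
    rw [hp n hn]
    constructor
    · apply Finset.sum_pos
      · intro j hj
        simp only [Finset.mem_Icc] at hj
        apply mul_pos
        · linarith [ha_dec j hj.1]
        · exact hppos (n - j) (by omega)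
      · exact ⟨1, Finset.mem_Icc.mpr ⟨le_refl 1, hn⟩⟩
    · calc ∑ j ∈ Finset.Icc 1 n, (a (j - 1) - a j) * p (n - j)
          ≤ ∑ j ∈ Finset.Icc 1 n, (a (j - 1) - a j) := by
            apply Finset.sum_le_sum
            intro j hj
            simp only [Finset.mem_Icc] at hj
            have hc : 0 ≤ a (j - 1) - a j := by linarith [ha_dec j hj.1]
            calc (a (j - 1) - a j) * p (n - j) ≤ (a (j - 1) - a j) * 1 :=
                  mul_le_mul_of_nonneg_left (hple (n - j) (by omega)) hc
              _ = a (j - 1) - a j := mul_one _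
      _ = 1 - a n := hsum n
      _ < 1 := by linarith [ha_pos n]
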